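/- Let τ be a renewal process with inter-arrival law K, K(∞) = 1 − ∑_{n≥1} K(n), and correlation ρ with ρ_k = 0 for k > 1 (case q = 1). Then the annealed critical point equals h_c^ann(β) = −log(1−K(∞)) − β²/2 − log(1 + (K(1)/(1−K(∞)))·(e^{ρ_1 β²} − 1)). -/

import Mathlib

open scoped Classical
open MeasureTheory ProbabilityTheory Filter

/-- Renewal indicator for a possibly transient renewal process (inter-arrival
times with values in `ℕ∞`, `⊤` meaning an infinite jump). -/
noncomputable def renewalδ {Ω : Type*} (T : ℕ → Ω → ℕ∞) (n : ℕ) (x : Ω) : ℝ :=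
  if ∃ m : ℕ, ∑ k ∈ Finset.range m, T k x = (n : ℕ∞) then 1 else 0

/-- The constrained annealed partition function of the pinning model with
correlation function `ρ`. -/
noncomputable def Zfun {Ω : Type*} [MeasurableSpace Ω] (P : Measure Ω)
    (T : ℕ → Ω → ℕ∞) (ρ : ℕ → ℝ) (β h : ℝ) (N : ℕ) : ℝ :=
  ∫ x, Real.exp ((h + β ^ 2 / 2) * ∑ n ∈ Finset.Icc 1 N, renewalδ T n x
      + β ^ 2 * ∑ i ∈ Finset.Icc 1 N, ∑ j ∈ Finset.Icc (i + 1) N,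
          ρ (j - i) * renewalδ T i x * renewalδ T j x) * renewalδ T N x ∂P



open scoped Classical
open MeasureTheory ProbabilityTheory Filter

/-- Compositions of `N`: lists of positive integers summing to `N`. -/
def comps : ℕ → Finset (List ℕ)
  | 0 => {[]}
  | (N+1) => (Finset.Icc 1 (N+1)).attach.biUnion
      (fun k => ((comps (N+1-k.1)).image (List.cons k.1)))
  decreasing_by
    have h1 : 1 ≤ k.1 := (Finset.mem_Icc.mp k.2).1
    omega

lemma mem_comps (N : ℕ) (t : List ℕ) :
    t ∈ comps N ↔ t.sum = N ∧ ∀ a ∈ t, 1 ≤ a := by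
  induction N using Nat.strong_induction_on generalizing t with
  | _ N ih =>
    match N with
    | 0 =>
      simp only [comps, Finset.mem_singleton]
      constructor
      · rintro rfl; simp
      · rintro ⟨hs, hp⟩
        cases t with
        | nil => rfl
        | cons a l =>
          exfalso
          have := hp a (by simp)
          simp only [List.sum_cons] at hs
          omega
    | (M+1) =>
      simp only [comps, Finset.mem_biUnion, Finset.mem_attach, Finset.mem_image, true_and,
        Subtype.exists]
      constructor
      · rintro ⟨k, hk, t', ht', rfl⟩
        have hk' := Finset.mem_Icc.mp hk
        have := (ih (M+1-k) (by omega) t').mp ht'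
        refine ⟨by simp [this.1]; omega, ?_⟩
        intro a ha
        rcases List.mem_cons.mp ha with rfl | ha
        · exact hk'.1
        · exact this.2 a ha
      · rintro ⟨hs, hp⟩
        cases t with
        | nil => simp at hs
        | cons a l =>
          have ha1 : 1 ≤ a := hp a (by simp)
          simp only [List.sum_cons] at hs
          refine ⟨a, Finset.mem_Icc.mpr ⟨ha1, by omega⟩, l, ?_, rfl⟩
          exact (ih (M+1-a) (by omega) l).mpr ⟨by omega, fun b hb => hp b (by simp [hb])⟩

lemma comps_sum_split (N : ℕ) (hN : 1 ≤ N) (g : List ℕ → ℝ) :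
    ∑ t ∈ comps N, g t = ∑ k ∈ Finset.Icc 1 N, ∑ t' ∈ comps (N - k), g (k :: t') := by
  obtain ⟨M, rfl⟩ : ∃ M, N = M + 1 := ⟨N - 1, by omega⟩
  rw [show comps (M+1) = (Finset.Icc 1 (M+1)).attach.biUnion
      (fun k => ((comps (M+1-k.1)).image (List.cons k.1))) by rw [comps]]
  rw [Finset.sum_biUnion]
  · rw [← Finset.sum_attach (Finset.Icc 1 (M+1))
      (fun k => ∑ t' ∈ comps (M+1-k), g (k :: t'))]
    refine Finset.sum_congr rfl fun k _ => ?_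
    rw [Finset.sum_image]
    intro a _ b _ hab
    exact (List.cons.injEq _ _ _ _ ▸ hab).2
  · intro a _ b _ hab
    refine Finset.disjoint_left.mpr fun t hta htb => ?_
    simp only [Finset.mem_image] at hta htb
    obtain ⟨ta, _, rfl⟩ := hta
    obtain ⟨tb, _, htb⟩ := htb
    exact hab (Subtype.ext (List.cons.injEq _ _ _ _ ▸ htb.symm).1.symm.symm)
/-- Weighted sum over compositions (homogeneous pinning partition function). -/
noncomputable def Vc (w : ℕ → ℝ) (N : ℕ) : ℝ :=
  ∑ t ∈ comps N, ∏ j ∈ Finset.range t.length, w (t.getD j 0)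

lemma Vc_zero (w : ℕ → ℝ) : Vc w 0 = 1 := by
  simp [Vc, comps]

lemma prod_len_cons (w : ℕ → ℝ) (k : ℕ) (t : List ℕ) :
    ∏ j ∈ Finset.range (k :: t).length, w ((k :: t).getD j 0)
      = w k * ∏ j ∈ Finset.range t.length, w (t.getD j 0) := by
  rw [List.length_cons, Finset.prod_range_succ']
  simp [mul_comm]

lemma Vc_rec (w : ℕ → ℝ) (N : ℕ) (hN : 1 ≤ N) :
    Vc w N = ∑ k ∈ Finset.Icc 1 N, w k * Vc w (N - k) := by
  rw [Vc, comps_sum_split N hN]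
  refine Finset.sum_congr rfl fun k _ => ?_
  rw [Vc, Finset.mul_sum]
  exact Finset.sum_congr rfl fun t' _ => prod_len_cons w k t'

lemma Vc_nonneg (w : ℕ → ℝ) (hw : ∀ k, 0 ≤ w k) (N : ℕ) : 0 ≤ Vc w N :=
  Finset.sum_nonneg fun t _ => Finset.prod_nonneg fun j _ => hw _

lemma Vc_pos (w : ℕ → ℝ) (hw : ∀ k, 0 ≤ w k) (h1 : 0 < w 1) (N : ℕ) : 0 < Vc w N := by
  induction N using Nat.strong_induction_on with
  | _ N ih =>
    match N with
    | 0 => rw [Vc_zero]; norm_num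
    | (M+1) =>
      rw [Vc_rec w (M+1) (by omega)]
      refine Finset.sum_pos' (fun k _ => mul_nonneg (hw k) (Vc_nonneg w hw _)) ?_
      exact ⟨1, Finset.mem_Icc.mpr ⟨le_refl _, by omega⟩,
        mul_pos h1 (ih (M+1-1) (by omega))⟩

lemma Vc_le_one (w : ℕ → ℝ) (hw : ∀ k, 0 ≤ w k)
    (hb : ∀ M, ∑ k ∈ Finset.Icc 1 M, w k ≤ 1) (N : ℕ) : Vc w N ≤ 1 := by
  induction N using Nat.strong_induction_on with
  | _ N ih =>
    match N with
    | 0 => rw [Vc_zero]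
    | (M+1) =>
      rw [Vc_rec w (M+1) (by omega)]
      calc ∑ k ∈ Finset.Icc 1 (M+1), w k * Vc w (M+1-k)
          ≤ ∑ k ∈ Finset.Icc 1 (M+1), w k * 1 := by
            refine Finset.sum_le_sum fun k hk => ?_
            have hk' := Finset.mem_Icc.mp hk
            exact mul_le_mul_of_nonneg_left (ih (M+1-k) (by omega)) (hw k)
        _ ≤ 1 := by simpa using hb (M+1)

lemma Vc_supermult (w : ℕ → ℝ) (hw : ∀ k, 0 ≤ w k) (m n : ℕ) :
    Vc w m * Vc w n ≤ Vc w (m + n) := by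
  induction n using Nat.strong_induction_on with
  | _ n ih =>
    match n with
    | 0 => rw [Vc_zero, mul_one]; simp
    | (n'+1) =>
      rw [Vc_rec w (n'+1) (by omega), Finset.mul_sum]
      rw [Vc_rec w (m + (n'+1)) (by omega)]
      calc ∑ k ∈ Finset.Icc 1 (n'+1), Vc w m * (w k * Vc w (n'+1-k))
          ≤ ∑ k ∈ Finset.Icc 1 (n'+1), w k * Vc w (m + (n'+1) - k) := by
            refine Finset.sum_le_sum fun k hk => ?_
            have hk' := Finset.mem_Icc.mp hk
            have h1 : m + (n'+1) - k = m + (n'+1-k) := by omega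
            rw [h1, ← mul_assoc, mul_comm (Vc w m) (w k), mul_assoc]
            refine mul_le_mul_of_nonneg_left ?_ (hw k)
            exact ih (n'+1-k) (by omega)
        _ ≤ ∑ k ∈ Finset.Icc 1 (m + (n'+1)), w k * Vc w (m + (n'+1) - k) := by
            refine Finset.sum_le_sum_of_subset_of_nonneg ?_ fun k _ _ =>
              mul_nonneg (hw k) (Vc_nonneg w hw _)
            exact Finset.Icc_subset_Icc_right (by omega)

lemma Vc_pow_le (w : ℕ → ℝ) (hw : ∀ k, 0 ≤ w k) (N0 r : ℕ) (q : ℕ) :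
    Vc w N0 ^ q * Vc w r ≤ Vc w (N0 * q + r) := by
  induction q with
  | zero => simp
  | succ q ihq =>
    have h1 : Vc w N0 ^ (q+1) * Vc w r = Vc w N0 * (Vc w N0 ^ q * Vc w r) := by ring
    rw [h1]
    calc Vc w N0 * (Vc w N0 ^ q * Vc w r)
        ≤ Vc w N0 * Vc w (N0 * q + r) :=
          mul_le_mul_of_nonneg_left ihq (Vc_nonneg w hw N0)
      _ ≤ Vc w (N0 + (N0 * q + r)) := Vc_supermult w hw _ _
      _ = Vc w (N0 * (q+1) + r) := by ring_nf

lemma exists_geom_lb (w : ℕ → ℝ) (hw : ∀ k, 0 ≤ w k) (h1 : 0 < w 1)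
    (θ : ℝ) (hθ0 : 0 < θ) (N0 : ℕ) (hN0 : 1 ≤ N0) (hVθ : θ ^ N0 ≤ Vc w N0) :
    ∃ c : ℝ, 0 < c ∧ ∀ N, c * θ ^ N ≤ Vc w N := by
  have hne : ((Finset.range N0).image (fun r => Vc w r / θ ^ r)).Nonempty :=
    ⟨Vc w 0 / θ ^ 0, Finset.mem_image.mpr ⟨0, Finset.mem_range.mpr (by omega), rfl⟩⟩
  set c := ((Finset.range N0).image (fun r => Vc w r / θ ^ r)).min' hne with hc
  have hcpos : 0 < c := by
    have := ((Finset.range N0).image (fun r => Vc w r / θ ^ r)).min'_mem hne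
    rw [← hc] at this
    obtain ⟨r, _, hr⟩ := Finset.mem_image.mp this
    rw [← hr]
    exact div_pos (Vc_pos w hw h1 r) (pow_pos hθ0 r)
  refine ⟨c, hcpos, fun N => ?_⟩
  have hdm : N0 * (N / N0) + N % N0 = N := Nat.div_add_mod N N0
  have hrlt : N % N0 < N0 := Nat.mod_lt N (by omega)
  have hcr : c ≤ Vc w (N % N0) / θ ^ (N % N0) :=
    Finset.min'_le _ _ (Finset.mem_image.mpr ⟨N % N0, Finset.mem_range.mpr hrlt, rfl⟩)
  have hVr : c * θ ^ (N % N0) ≤ Vc w (N % N0) := by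
    rw [le_div_iff₀ (pow_pos hθ0 _)] at hcr
    linarith
  calc c * θ ^ N = (θ ^ N0) ^ (N / N0) * (c * θ ^ (N % N0)) := by
        rw [← pow_mul, ← mul_assoc, mul_comm ((θ:ℝ)^(N0 * (N/N0))) c, mul_assoc, ← pow_add, hdm]
    _ ≤ Vc w N0 ^ (N / N0) * Vc w (N % N0) := by
        refine mul_le_mul ?_ hVr (mul_nonneg hcpos.le (pow_nonneg hθ0.le _))
          (pow_nonneg (Vc_nonneg w hw N0) _)
        exact pow_le_pow_left₀ (pow_nonneg hθ0.le N0) hVθ _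
    _ ≤ Vc w (N0 * (N / N0) + N % N0) := Vc_pow_le w hw _ _ _
    _ = Vc w N := by rw [hdm]

/-- Cumulative sums of `Vc`. -/
noncomputable def Gc (w : ℕ → ℝ) (M : ℕ) : ℝ := ∑ j ∈ Finset.range (M+1), Vc w j

lemma Gc_zero (w : ℕ → ℝ) : Gc w 0 = 1 := by simp [Gc, Vc_zero]

lemma Gc_mono (w : ℕ → ℝ) (hw : ∀ k, 0 ≤ w k) {M M' : ℕ} (h : M ≤ M') :
    Gc w M ≤ Gc w M' := by
  refine Finset.sum_le_sum_of_subset_of_nonneg ?_ fun j _ _ => Vc_nonneg w hw j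
  exact Finset.range_subset_range.mpr (by omega)

lemma Gc_nonneg (w : ℕ → ℝ) (hw : ∀ k, 0 ≤ w k) (M : ℕ) : 0 ≤ Gc w M :=
  Finset.sum_nonneg fun j _ => Vc_nonneg w hw j

lemma Gc_ge_one (w : ℕ → ℝ) (hw : ∀ k, 0 ≤ w k) (M : ℕ) : 1 ≤ Gc w M := by
  have := Gc_mono w hw (Nat.zero_le M)
  rw [Gc_zero] at this; exact this

lemma Gc_rec (w : ℕ → ℝ) (M : ℕ) :
    Gc w M = 1 + ∑ k ∈ Finset.Icc 1 M, w k * Gc w (M - k) := by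
  induction M with
  | zero => simp [Gc_zero]
  | succ M ih =>
    have hsplit : ∑ k ∈ Finset.Icc 1 (M+1), w k * Gc w (M+1-k)
        = ∑ k ∈ Finset.Icc 1 M, w k * Gc w (M+1-k) + w (M+1) * Gc w 0 := by
      rw [Finset.sum_Icc_succ_top (by omega : 1 ≤ M+1)]; norm_num
    have hGs : ∀ k ∈ Finset.Icc 1 M, w k * Gc w (M+1-k)
        = w k * Gc w (M-k) + w k * Vc w (M+1-k) := by
      intro k hk
      have hk' := Finset.mem_Icc.mp hk
      have : M+1-k = (M-k)+1 := by omega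
      rw [this, Gc, Finset.sum_range_succ, ← Gc, ← this, mul_add]
    have hVs : ∑ k ∈ Finset.Icc 1 (M+1), w k * Vc w (M+1-k)
        = ∑ k ∈ Finset.Icc 1 M, w k * Vc w (M+1-k) + w (M+1) * Vc w 0 := by
      rw [Finset.sum_Icc_succ_top (by omega : 1 ≤ M+1)]; norm_num
    have hG1 : Gc w (M+1) = Gc w M + Vc w (M+1) := by
      rw [Gc, Finset.sum_range_succ, ← Gc]
    rw [hG1, hsplit, Finset.sum_congr rfl hGs, Finset.sum_add_distrib, ih,
      Vc_rec w (M+1) (by omega), hVs, Gc_zero, Vc_zero]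
    ring
lemma subcrit_exists (w : ℕ → ℝ) (hw : ∀ k, 0 ≤ w k)
    (happrox : ∀ ε : ℝ, 0 < ε → ∃ L : ℕ, 1 - ε ≤ ∑ k ∈ Finset.Icc 1 L, w k)
    (θ : ℝ) (hθ0 : 0 < θ) (hθ1 : θ < 1) :
    ∃ N0 : ℕ, 1 ≤ N0 ∧ θ ^ N0 ≤ Vc w N0 := by
  by_contra hcon
  push_neg at hcon
  have hVlt : ∀ N, 1 ≤ N → Vc w N < θ ^ N := fun N hN => hcon N hN
  -- Gc is bounded
  have hGb : ∀ M, Gc w M ≤ (1 - θ)⁻¹ := by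
    intro M
    have h1 : Gc w M ≤ ∑ j ∈ Finset.range (M+1), θ ^ j := by
      refine Finset.sum_le_sum fun j _ => ?_
      match j with
      | 0 => rw [Vc_zero]; norm_num
      | (j'+1) => exact (hVlt (j'+1) (by omega)).le
    refine h1.trans ?_
    refine Summable.sum_le_tsum (Finset.range (M+1)) (fun j _ => pow_nonneg hθ0.le j) (?_ : Summable (fun j : ℕ => θ ^ j)) |>.trans ?_
    · exact summable_geometric_of_lt_one hθ0.le hθ1
    · rw [tsum_geometric_of_lt_one hθ0.le hθ1]
  have hbdd : BddAbove (Set.range (Gc w)) := ⟨(1-θ)⁻¹, by rintro x ⟨M, rfl⟩; exact hGb M⟩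
  set g := sSup (Set.range (Gc w)) with hg
  have hg1 : 1 ≤ g := by
    have := le_csSup hbdd ⟨0, rfl⟩
    rw [Gc_zero] at this; exact this
  set ε : ℝ := 1 / (2 * (g + 1)) with hε
  have hεpos : 0 < ε := by positivity
  have hεhalf : ε ≤ 1 / 2 := by
    rw [hε]
    rw [div_le_div_iff₀ (by positivity) (by norm_num)]
    nlinarith
  obtain ⟨L, hL⟩ := happrox ε hεpos
  obtain ⟨x, ⟨M0, rfl⟩, hM0⟩ := exists_lt_of_lt_csSup (Set.range_nonempty (Gc w))
    (show g - ε < g by linarith)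
  have hchain : 1 + (1 - ε) * (g - ε) ≤ g := by
    have h2 : Gc w (M0 + L) ≤ g := le_csSup hbdd ⟨M0 + L, rfl⟩
    have h3 : ∑ k ∈ Finset.Icc 1 L, w k * Gc w (M0 + L - k)
        ≤ ∑ k ∈ Finset.Icc 1 (M0 + L), w k * Gc w (M0 + L - k) := by
      refine Finset.sum_le_sum_of_subset_of_nonneg
        (Finset.Icc_subset_Icc_right (by omega)) fun k _ _ =>
        mul_nonneg (hw k) (Gc_nonneg w hw _)
    have h4 : ∑ k ∈ Finset.Icc 1 L, w k * Gc w M0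
        ≤ ∑ k ∈ Finset.Icc 1 L, w k * Gc w (M0 + L - k) := by
      refine Finset.sum_le_sum fun k hk => ?_
      have hk' := Finset.mem_Icc.mp hk
      exact mul_le_mul_of_nonneg_left (Gc_mono w hw (by omega)) (hw k)
    have h5 : (1 - ε) * (g - ε) ≤ (∑ k ∈ Finset.Icc 1 L, w k) * Gc w M0 := by
      refine mul_le_mul hL hM0.le (by linarith) ?_
      exact Finset.sum_nonneg fun k _ => hw k
    rw [← Finset.sum_mul] at h4
    have := Gc_rec w (M0 + L)
    nlinarith
  have hεg : ε * (g + 1) = 1 / 2 := by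
    rw [hε]; field_simp
  nlinarith [sq_nonneg ε]

lemma supercrit_exists (w : ℕ → ℝ) (hw : ∀ k, 0 ≤ w k)
    (L : ℕ) (hL1 : 1 ≤ L) (hsL : 1 < ∑ k ∈ Finset.Icc 1 L, w k) :
    ∃ N0 : ℕ, 1 ≤ N0 ∧ 1 < Vc w N0 := by
  set sL := ∑ k ∈ Finset.Icc 1 L, w k with hsLdef
  have hsL0 : 0 < sL := by linarith
  -- step inequality
  have hstep : ∀ M, L ≤ M → sL * Gc w (M - L) ≤ Gc w M := by
    intro M hM
    have h3 : ∑ k ∈ Finset.Icc 1 L, w k * Gc w (M - k)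
        ≤ ∑ k ∈ Finset.Icc 1 M, w k * Gc w (M - k) :=
      Finset.sum_le_sum_of_subset_of_nonneg
        (Finset.Icc_subset_Icc_right (by omega)) fun k _ _ =>
        mul_nonneg (hw k) (Gc_nonneg w hw _)
    have h4 : ∑ k ∈ Finset.Icc 1 L, w k * Gc w (M - L)
        ≤ ∑ k ∈ Finset.Icc 1 L, w k * Gc w (M - k) := by
      refine Finset.sum_le_sum fun k hk => ?_
      have hk' := Finset.mem_Icc.mp hk
      exact mul_le_mul_of_nonneg_left (Gc_mono w hw (by omega)) (hw k)
    rw [← Finset.sum_mul] at h4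
    have := Gc_rec w M
    nlinarith
  have hpow : ∀ m : ℕ, sL ^ m ≤ Gc w (m * L) := by
    intro m
    induction m with
    | zero => simpa [Gc_zero] using le_refl (1:ℝ)
    | succ m ih =>
      have h1 : sL ^ (m+1) = sL * sL ^ m := by ring
      rw [h1]
      calc sL * sL ^ m ≤ sL * Gc w (m * L) := mul_le_mul_of_nonneg_left ih hsL0.le
        _ ≤ Gc w ((m+1) * L) := by
            have := hstep ((m+1) * L) (Nat.le_mul_of_pos_left L (by omega))
            have heq : (m+1) * L - L = m * L := by
              have h : (m+1) * L = m * L + L := by ring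
              omega
            rw [heq] at this
            exact this
  -- choose m with 1 + m*L < sL^m
  obtain ⟨m, hm⟩ : ∃ m : ℕ, 1 + (m : ℝ) * L < sL ^ m := by
    have hr1 : |1 / sL| < 1 := by
      rw [abs_of_pos (by positivity)]
      rw [div_lt_one hsL0]; exact hsL
    have hs1 : Summable (fun n : ℕ => (n : ℝ) * (1/sL) ^ n) := by
      have := summable_pow_mul_geometric_of_norm_lt_one (R := ℝ) 1
        (by rw [Real.norm_eq_abs]; exact hr1)
      refine this.congr fun n => by simp
    have hs2 : Summable (fun n : ℕ => (1/sL) ^ n) :=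
      summable_geometric_of_lt_one (by positivity) (by rwa [abs_of_pos (by positivity)] at hr1)
    have ht : Tendsto (fun n : ℕ => (1/sL) ^ n + (L:ℝ) * ((n:ℝ) * (1/sL) ^ n))
        atTop (nhds (0 + (L:ℝ) * 0)) :=
      (hs2.tendsto_atTop_zero).add ((hs1.tendsto_atTop_zero).const_mul _)
    rw [mul_zero, add_zero] at ht
    have := (ht.eventually (eventually_lt_nhds (show (0:ℝ) < 1 by norm_num))).exists
    obtain ⟨m, hm⟩ := this
    refine ⟨m, ?_⟩
    have hpow0 : (0:ℝ) < (1/sL) ^ m := by positivity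
    have hkey : (1 + (m:ℝ) * L) * (1/sL) ^ m = (1/sL) ^ m + L * (m * (1/sL) ^ m) := by ring
    have h2 : (1 + (m:ℝ) * L) * (1/sL) ^ m < 1 := by rw [hkey]; exact hm
    have h3 : (1/sL) ^ m = (sL ^ m)⁻¹ := by
      rw [one_div, inv_pow]
    rw [h3, mul_inv_lt_iff₀ (by positivity), one_mul] at h2
    exact h2
  by_contra hcon
  push_neg at hcon
  have hVle : ∀ N, 1 ≤ N → Vc w N ≤ 1 := fun N hN => hcon N hN
  have hGle : Gc w (m * L) ≤ 1 + (m : ℝ) * L := by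
    rw [Gc]
    calc ∑ j ∈ Finset.range (m * L + 1), Vc w j
        ≤ ∑ j ∈ Finset.range (m * L + 1), (1:ℝ) := by
          refine Finset.sum_le_sum fun j _ => ?_
          match j with
          | 0 => rw [Vc_zero]
          | (j'+1) => exact hVle (j'+1) (by omega)
      _ = 1 + (m : ℝ) * L := by
          rw [Finset.sum_const, Finset.card_range]
          push_cast; ring
  have := hpow m
  linarith
lemma partial_sum_eq {Ω : Type*} (T : ℕ → Ω → ℕ∞) (x : Ω) (t : List ℕ)
    (hx : ∀ j, j < t.length → T j x = ((t.getD j 0 : ℕ) : ℕ∞))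
    (j : ℕ) (hj : j ≤ t.length) :
    ∑ k ∈ Finset.range j, T k x = ((∑ k ∈ Finset.range j, t.getD k 0 : ℕ) : ℕ∞) := by
  induction j with
  | zero => simp
  | succ j ih =>
    rw [Finset.sum_range_succ, Finset.sum_range_succ, ih (by omega), hx j (by omega)]
    push_cast
    rfl

lemma sum_range_getD (t : List ℕ) :
    ∑ k ∈ Finset.range t.length, t.getD k 0 = t.sum := by
  induction t with
  | nil => simp
  | cons a l ih =>
    rw [List.length_cons, Finset.sum_range_succ']
    simp only [List.getD_cons_succ, List.getD_cons_zero, List.sum_cons, ih]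
    ring

lemma Zfun_comps {Ω : Type*} [MeasurableSpace Ω] (P : Measure Ω) [IsProbabilityMeasure P]
    (T : ℕ → Ω → ℕ∞) (hmeas : ∀ i, Measurable (T i))
    (hindep : iIndepFun T P)
    (hident : ∀ i, Measure.map (T i) P = Measure.map (T 0) P)
    (K : ℕ → ℝ) (hK0 : K 0 = 0)
    (hlaw : ∀ n : ℕ, (P (T 0 ⁻¹' {(n : ℕ∞)})).toReal = K n)
    (ρ : ℕ → ℝ) (hρ : ∀ k, 1 < k → ρ k = 0) (β h : ℝ) (N : ℕ) :
    Zfun P T ρ β h N = ∑ t ∈ comps N,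
      Real.exp ((h + β ^ 2 / 2) * t.length
          + β ^ 2 * (ρ 1 * (((Finset.range t.length).filter
              (fun j => 0 < j ∧ t.getD j 0 = 1)).card)))
        * ∏ j ∈ Finset.range t.length, K (t.getD j 0) := by
  classical
  set c : List ℕ → ℝ := fun t => Real.exp ((h + β ^ 2 / 2) * t.length
      + β ^ 2 * (ρ 1 * (((Finset.range t.length).filter
          (fun j => 0 < j ∧ t.getD j 0 = 1)).card))) with hcdef
  set Ev : List ℕ → Set Ω :=
    fun t => {x | ∀ j, j < t.length → T j x = ((t.getD j 0 : ℕ) : ℕ∞)} with hEvdef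
  have hEvInter : ∀ t : List ℕ,
      Ev t = ⋂ j ∈ Finset.range t.length, (T j) ⁻¹' {((t.getD j 0 : ℕ) : ℕ∞)} := by
    intro t
    ext x
    simp only [hEvdef, Set.mem_setOf_eq, Set.mem_iInter, Finset.mem_range, Set.mem_preimage,
      Set.mem_singleton_iff]
  have hEvmeas : ∀ t, MeasurableSet (Ev t) := by
    intro t
    rw [hEvInter t]
    exact Finset.measurableSet_biInter _ fun j _ => hmeas j (measurableSet_singleton _)
  -- probability of a single-value event
  have hsing : ∀ (k : ℕ) (v : ℕ), (P ((T k) ⁻¹' {(v : ℕ∞)})).toReal = K v := by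
    intro k v
    rw [← Measure.map_apply (hmeas k) (measurableSet_singleton _), hident k,
      Measure.map_apply (hmeas 0) (measurableSet_singleton _)]
    exact hlaw v
  -- null set where some jump is 0
  have hnull : P {x | ¬ ∀ k : ℕ, T k x ≠ 0} = 0 := by
    have hsub : {x | ¬ ∀ k : ℕ, T k x ≠ 0} ⊆ ⋃ k : ℕ, (T k) ⁻¹' {(0 : ℕ∞)} := by
      intro x hx
      push_neg at hx
      obtain ⟨k, hk⟩ := hx
      exact Set.mem_iUnion.mpr ⟨k, by simpa using hk⟩
    refine measure_mono_null hsub (measure_iUnion_null fun k => ?_)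
    have h2 := hsing k 0
    rw [hK0] at h2
    have h3 : P ((T k) ⁻¹' {((0:ℕ) : ℕ∞)}) ≠ ⊤ := measure_ne_top P _
    have := (ENNReal.toReal_eq_zero_iff _).mp h2
    rcases this with h | h
    · simpa using h
    · exact absurd h h3
  -- cylinder probabilities
  have hprob : ∀ t : List ℕ, (P (Ev t)).toReal
      = ∏ j ∈ Finset.range t.length, K (t.getD j 0) := by
    intro t
    rw [hEvInter t,
      hindep.measure_inter_preimage_eq_mul (Finset.range t.length)
        (fun j _ => measurableSet_singleton _),
      ENNReal.toReal_prod]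
    exact Finset.prod_congr rfl fun j _ => hsing j _
  -- pointwise identity on the good set
  have hptw : ∀ x : Ω, (∀ k : ℕ, T k x ≠ 0) →
      Real.exp ((h + β ^ 2 / 2) * ∑ n ∈ Finset.Icc 1 N, renewalδ T n x
        + β ^ 2 * ∑ i ∈ Finset.Icc 1 N, ∑ j ∈ Finset.Icc (i + 1) N,
            ρ (j - i) * renewalδ T i x * renewalδ T j x) * renewalδ T N x
      = ∑ t ∈ comps N, (Ev t).indicator (fun _ => c t) x := by
    intro x hx
    by_cases hδ : ∃ jm : ℕ, ∑ k ∈ Finset.range jm, T k x = (N : ℕ∞)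
    · obtain ⟨jm, hjm⟩ := hδ
      have hfin : ∀ k, k < jm → T k x ≠ ⊤ := by
        intro k hk
        have h1 : T k x ≤ ∑ k ∈ Finset.range jm, T k x :=
          Finset.single_le_sum (f := fun k => T k x) (fun _ _ => zero_le)
            (Finset.mem_range.mpr hk)
        rw [hjm] at h1
        exact ne_top_of_le_ne_top (by simp) h1
      set t : List ℕ := List.ofFn (fun k : Fin jm => (T k.1 x).toNat) with htdef
      have hlen : t.length = jm := by simp [htdef]
      have hgetD : ∀ j, j < jm → t.getD j 0 = (T j x).toNat := by
        intro j hj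
        rw [htdef, List.getD_eq_getElem _ _ (by simpa using hj)]
        simp
      have hget1 : ∀ j, j < jm → 1 ≤ t.getD j 0 := by
        intro j hj
        rw [hgetD j hj]
        have h1 : (T j x).toNat ≠ 0 := by
          rw [ne_eq, ENat.toNat_eq_zero]
          push_neg
          exact ⟨hx j, hfin j hj⟩
        omega
      have hcast : ∀ j, j < jm → T j x = ((t.getD j 0 : ℕ) : ℕ∞) := by
        intro j hj
        rw [hgetD j hj, ENat.coe_toNat (hfin j hj)]
      have hxEt : ∀ j, j < t.length → T j x = ((t.getD j 0 : ℕ) : ℕ∞) := by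
        rw [hlen]; exact hcast
      set σ : ℕ → ℕ := fun j => ∑ k ∈ Finset.range j, t.getD k 0 with hσdef
      have hσsum : ∀ j, j ≤ jm → (∑ k ∈ Finset.range j, T k x) = ((σ j : ℕ) : ℕ∞) := by
        intro j hj
        exact partial_sum_eq T x t hxEt j (by omega)
      have hσjm : σ jm = N := by
        have h1 := hσsum jm le_rfl
        rw [hjm] at h1
        exact (Nat.cast_inj.mp h1).symm
      have htsum : t.sum = N := by
        rw [← sum_range_getD t, hlen]
        exact hσjm
      have htmem : t ∈ comps N := by
        rw [mem_comps]
        refine ⟨htsum, fun a ha => ?_⟩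
        obtain ⟨i, hi⟩ := List.mem_iff_get.mp ha
        have : t.getD i.1 0 = a := by
          rw [List.getD_eq_getElem _ _ i.2]
          simpa using hi
        have := hget1 i.1 (by omega)
        omega
      have hσmono : ∀ i j, i ≤ j → σ i ≤ σ j := by
        intro i j hij
        exact Finset.sum_le_sum_of_subset (Finset.range_subset_range.mpr hij)
      have hσstep : ∀ j, j < jm → σ (j+1) = σ j + t.getD j 0 := by
        intro j _
        rw [hσdef]
        exact Finset.sum_range_succ _ j
      have hσlt : ∀ i j, i < j → j ≤ jm → σ i + 1 ≤ σ j := by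
        intro i j hij hj
        have h1 : σ (i+1) = σ i + t.getD i 0 := hσstep i (by omega)
        have h2 := hget1 i (by omega)
        have h3 : σ (i+1) ≤ σ j := hσmono (i+1) j (by omega)
        omega
      have hσge : ∀ j, j ≤ jm → j ≤ σ j := by
        intro j hj
        induction j with
        | zero => omega
        | succ j ih =>
          have := hσlt j (j+1) (by omega) hj
          have := ih (by omega)
          omega
      set D : Finset ℕ := (Finset.Icc 1 jm).image σ with hDdef
      have hDsub : D ⊆ Finset.Icc 1 N := by
        intro n hn
        obtain ⟨j, hj, rfl⟩ := Finset.mem_image.mp hn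
        have hj' := Finset.mem_Icc.mp hj
        have h1 := hσge j hj'.2
        have h2 : σ j ≤ σ jm := hσmono j jm hj'.2
        rw [hσjm] at h2
        exact Finset.mem_Icc.mpr ⟨by omega, h2⟩
      have hbridge : ∀ n, 1 ≤ n → n ≤ N →
          ((∃ jj : ℕ, ∑ k ∈ Finset.range jj, T k x = (n : ℕ∞)) ↔ n ∈ D) := by
        intro n h1 h2
        constructor
        · rintro ⟨jj, hjj⟩
          have hjle : jj ≤ jm := by
            by_contra hgt
            push_neg at hgt
            have hsplit : ∑ k ∈ Finset.range (jm+1), T k x ≤ ∑ k ∈ Finset.range jj, T k x :=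
              Finset.sum_le_sum_of_subset (Finset.range_subset_range.mpr (by omega))
            rw [Finset.sum_range_succ, hjm, hjj] at hsplit
            have hT1 : (1:ℕ∞) ≤ T jm x := ENat.one_le_iff_ne_zero.mpr (hx jm)
            have h4 : ((N:ℕ∞) + 1) ≤ (n:ℕ∞) := le_trans (add_le_add le_rfl hT1) hsplit
            have h5 : (((N+1:ℕ)):ℕ∞) ≤ (n:ℕ∞) := by push_cast; exact h4
            have := Nat.cast_le.mp h5
            omega
          have h6 := hσsum jj hjle
          rw [hjj] at h6
          have hσn : σ jj = n := (Nat.cast_inj.mp h6).symm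
          have hjj1 : 1 ≤ jj := by
            rcases Nat.eq_zero_or_pos jj with h7 | h7
            · exfalso
              rw [h7] at hσn
              have : σ 0 = 0 := by simp [hσdef]
              omega
            · omega
          exact Finset.mem_image.mpr ⟨jj, Finset.mem_Icc.mpr ⟨hjj1, hjle⟩, hσn⟩
        · intro hn
          obtain ⟨j, hj, rfl⟩ := Finset.mem_image.mp hn
          exact ⟨j, by rw [hσsum j (Finset.mem_Icc.mp hj).2]⟩
      have hδeq : ∀ n, 1 ≤ n → n ≤ N →
          renewalδ T n x = if n ∈ D then (1:ℝ) else 0 := by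
        intro n h1 h2
        rw [renewalδ]
        by_cases hmem : n ∈ D
        · rw [if_pos ((hbridge n h1 h2).mpr hmem), if_pos hmem]
        · rw [if_neg (fun hex => hmem ((hbridge n h1 h2).mp hex)), if_neg hmem]
      have hδN : renewalδ T N x = 1 := by rw [renewalδ, if_pos ⟨jm, hjm⟩]
      have hinj : Set.InjOn σ (Finset.Icc 1 jm : Set ℕ) := by
        intro i hi j hj hij
        simp only [Finset.coe_Icc, Set.mem_Icc] at hi hj
        rcases lt_trichotomy i j with h | h | h
        · have := hσlt i j h hj.2; omega
        · exact h
        · have := hσlt j i h hi.2; omega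
      have hcardD : D.card = jm := by
        rw [hDdef, Finset.card_image_of_injOn hinj, Nat.card_Icc]
        omega
      have hsum1 : ∑ n ∈ Finset.Icc 1 N, renewalδ T n x = (jm : ℝ) := by
        rw [Finset.sum_congr rfl (fun n hn => hδeq n (Finset.mem_Icc.mp hn).1
          (Finset.mem_Icc.mp hn).2)]
        rw [Finset.sum_ite_mem, Finset.inter_eq_right.mpr hDsub, Finset.sum_const,
          hcardD]
        simp
      -- pairs
      have hpair_iff : ∀ j, 1 ≤ j → j ≤ jm →
          (σ j + 1 ∈ D ↔ (j < jm ∧ t.getD j 0 = 1)) := by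
        intro j hj1 hj2
        constructor
        · intro hmem
          obtain ⟨j', hj', hjeq⟩ := Finset.mem_image.mp hmem
          have hj'2 := Finset.mem_Icc.mp hj'
          have hlt : j < j' := by
            by_contra hle
            push_neg at hle
            have := hσmono j' j hle
            omega
          have hjlt : j < jm := by omega
          have h1 : σ (j+1) = σ j + t.getD j 0 := hσstep j hjlt
          have h2 : σ (j+1) ≤ σ j' := hσmono (j+1) j' (by omega)
          have h3 := hget1 j hjlt
          refine ⟨hjlt, by omega⟩
        · rintro ⟨hjlt, hgd⟩
          have h1 : σ (j+1) = σ j + 1 := by rw [hσstep j hjlt, hgd]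
          exact Finset.mem_image.mpr ⟨j+1, Finset.mem_Icc.mpr ⟨by omega, by omega⟩, by omega⟩
      have hsum2 : ∑ i ∈ Finset.Icc 1 N, ∑ j ∈ Finset.Icc (i + 1) N,
            ρ (j - i) * renewalδ T i x * renewalδ T j x
          = ρ 1 * (((Finset.range t.length).filter
              (fun j => 0 < j ∧ t.getD j 0 = 1)).card) := by
        have hinner : ∀ i ∈ Finset.Icc 1 N,
            ∑ j ∈ Finset.Icc (i + 1) N, ρ (j - i) * renewalδ T i x * renewalδ T j x
            = ρ 1 * (if i ∈ D ∧ i + 1 ∈ D then (1:ℝ) else 0) := by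
          intro i hi
          have hi' := Finset.mem_Icc.mp hi
          by_cases hiN : i + 1 ≤ N
          · rw [Finset.sum_eq_single_of_mem (i+1) (Finset.mem_Icc.mpr ⟨le_refl _, hiN⟩)]
            · rw [show i + 1 - i = 1 by omega, hδeq i hi'.1 hi'.2,
                hδeq (i+1) (by omega) hiN]
              by_cases h1 : i ∈ D <;> by_cases h2 : i + 1 ∈ D <;>
                simp [h1, h2]
            · intro j hj hne
              have hj' := Finset.mem_Icc.mp hj
              rw [hρ (j - i) (by omega)]
              ring
          · rw [Finset.Icc_eq_empty (by omega), Finset.sum_empty]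
            have h2 : i + 1 ∉ D := fun hmem => hiN (Finset.mem_Icc.mp (hDsub hmem)).2
            simp [h2]
        rw [Finset.sum_congr rfl hinner, ← Finset.mul_sum]
        congr 1
        rw [Finset.sum_ite, Finset.sum_const, Finset.sum_const_zero, add_zero,
          nsmul_eq_mul, mul_one]
        have hseteq : (Finset.Icc 1 N).filter (fun i => i ∈ D ∧ i + 1 ∈ D)
            = D.filter (fun i => i + 1 ∈ D) := by
          ext i
          simp only [Finset.mem_filter]
          constructor
          · rintro ⟨_, h1, h2⟩; exact ⟨h1, h2⟩
          · rintro ⟨h1, h2⟩; exact ⟨hDsub h1, h1, h2⟩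
        rw [hseteq]
        have himg : D.filter (fun i => i + 1 ∈ D)
            = ((Finset.Icc 1 jm).filter (fun j => σ j + 1 ∈ D)).image σ := by
          rw [hDdef, Finset.filter_image]
        have hcard1 : (D.filter (fun i => i + 1 ∈ D)).card
            = ((Finset.Icc 1 jm).filter (fun j => σ j + 1 ∈ D)).card := by
          rw [himg]
          exact Finset.card_image_of_injOn (hinj.mono (by
            intro j hj
            exact Finset.filter_subset _ _ hj))
        have hfil : (Finset.Icc 1 jm).filter (fun j => σ j + 1 ∈ D)
            = (Finset.range t.length).filter (fun j => 0 < j ∧ t.getD j 0 = 1) := by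
          ext j
          simp only [Finset.mem_filter, Finset.mem_Icc, Finset.mem_range, hlen]
          constructor
          · rintro ⟨⟨h1, h2⟩, h3⟩
            have := (hpair_iff j h1 h2).mp h3
            exact ⟨this.1, by omega, this.2⟩
          · rintro ⟨h1, h2, h3⟩
            exact ⟨⟨by omega, by omega⟩, (hpair_iff j (by omega) (by omega)).mpr ⟨h1, h3⟩⟩
        rw [hcard1, hfil]
      -- uniqueness
      have huniq : ∀ t' ∈ comps N, x ∈ Ev t' → t' = t := by
        intro t' ht' hxE
        have hxE' : ∀ j, j < t'.length → T j x = ((t'.getD j 0 : ℕ) : ℕ∞) := hxE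
        have hmem' := (mem_comps N t').mp ht'
        have hs' : ∑ k ∈ Finset.range t'.length, T k x = (N : ℕ∞) := by
          rw [partial_sum_eq T x t' hxE' t'.length le_rfl, sum_range_getD, hmem'.1]
        have hleneq : t'.length = jm := by
          by_contra hne
          rcases Nat.lt_or_ge t'.length jm with hlt | hge
          · -- t'.length < jm
            have hsplit : ∑ k ∈ Finset.range (t'.length + 1), T k x
                ≤ ∑ k ∈ Finset.range jm, T k x :=
              Finset.sum_le_sum_of_subset (Finset.range_subset_range.mpr (by omega))
            rw [Finset.sum_range_succ, hs', hjm] at hsplit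
            have hT1 : (1:ℕ∞) ≤ T t'.length x := ENat.one_le_iff_ne_zero.mpr (hx _)
            have h4 : ((N:ℕ∞) + 1) ≤ (N:ℕ∞) := le_trans (add_le_add le_rfl hT1) hsplit
            have h5 : (((N+1:ℕ)):ℕ∞) ≤ (N:ℕ∞) := by push_cast; exact h4
            have := Nat.cast_le.mp h5
            omega
          · have hlt : jm < t'.length := by omega
            have hsplit : ∑ k ∈ Finset.range (jm + 1), T k x
                ≤ ∑ k ∈ Finset.range t'.length, T k x :=
              Finset.sum_le_sum_of_subset (Finset.range_subset_range.mpr (by omega))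
            rw [Finset.sum_range_succ, hs', hjm] at hsplit
            have hT1 : (1:ℕ∞) ≤ T jm x := ENat.one_le_iff_ne_zero.mpr (hx _)
            have h4 : ((N:ℕ∞) + 1) ≤ (N:ℕ∞) := le_trans (add_le_add le_rfl hT1) hsplit
            have h5 : (((N+1:ℕ)):ℕ∞) ≤ (N:ℕ∞) := by push_cast; exact h4
            have := Nat.cast_le.mp h5
            omega
        refine List.ext_getElem (by rw [hleneq, hlen]) ?_
        intro i h1 h2
        have e1 : T i x = ((t'.getD i 0 : ℕ) : ℕ∞) := hxE' i h1
        have e2 : T i x = ((t.getD i 0 : ℕ) : ℕ∞) := hxEt i h2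
        have : t'.getD i 0 = t.getD i 0 := by
          rw [e1] at e2
          exact Nat.cast_inj.mp e2
        rwa [List.getD_eq_getElem _ _ h1, List.getD_eq_getElem _ _ h2] at this
      -- conclude positive case
      rw [hsum1, hsum2, hδN, mul_one]
      rw [Finset.sum_eq_single_of_mem t htmem]
      · have hxmem : x ∈ Ev t := hxEt
        rw [Set.indicator_of_mem hxmem]
        rw [hcdef]
        simp only [hlen]
      · intro t' ht' hne
        rw [Set.indicator_of_notMem]
        intro hxE
        exact hne (huniq t' ht' hxE)
    · -- no renewal at N
      have hδN : renewalδ T N x = 0 := by rw [renewalδ, if_neg hδ]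
      rw [hδN, mul_zero]
      symm
      refine Finset.sum_eq_zero fun t' ht' => ?_
      rw [Set.indicator_of_notMem]
      intro hxE
      refine hδ ⟨t'.length, ?_⟩
      have hxE' : ∀ j, j < t'.length → T j x = ((t'.getD j 0 : ℕ) : ℕ∞) := hxE
      rw [partial_sum_eq T x t' hxE' t'.length le_rfl, sum_range_getD,
        ((mem_comps N t').mp ht').1]
    -- end hptw
  rw [Zfun]
  have hae : (fun x => Real.exp ((h + β ^ 2 / 2) * ∑ n ∈ Finset.Icc 1 N, renewalδ T n x
        + β ^ 2 * ∑ i ∈ Finset.Icc 1 N, ∑ j ∈ Finset.Icc (i + 1) N,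
            ρ (j - i) * renewalδ T i x * renewalδ T j x) * renewalδ T N x)
      =ᵐ[P] (fun x => ∑ t ∈ comps N, (Ev t).indicator (fun _ => c t) x) := by
    rw [Filter.EventuallyEq, ae_iff]
    refine measure_mono_null ?_ hnull
    intro x hxne
    intro hall
    exact hxne (hptw x hall)
  rw [integral_congr_ae hae,
    integral_finset_sum _ (fun t _ => (integrable_const (c t)).indicator (hEvmeas t))]
  refine Finset.sum_congr rfl fun t _ => ?_
  rw [integral_indicator_const (c t) (hEvmeas t), smul_eq_mul, measureReal_def, hprob t, mul_comm]
lemma sum_Icc_one (f : ℕ → ℝ) (M : ℕ) :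
    ∑ k ∈ Finset.Icc 1 M, f k = ∑ n ∈ Finset.range M, f (n + 1) := by
  rw [← Finset.Ico_add_one_right_eq_Icc, Finset.sum_Ico_eq_sum_range]
  simp [add_comm]

lemma summand_eq (K : ℕ → ℝ) (r β h : ℝ) (t : List ℕ) :
    Real.exp ((h + β ^ 2 / 2) * t.length
        + β ^ 2 * (r * (((Finset.range t.length).filter
            (fun j => 0 < j ∧ t.getD j 0 = 1)).card)))
      * ∏ j ∈ Finset.range t.length, K (t.getD j 0)
    = ∏ j ∈ Finset.range t.length,
        (Real.exp (h + β ^ 2 / 2) * (if 0 < j ∧ t.getD j 0 = 1 then Real.exp (r * β ^ 2) else 1)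
          * K (t.getD j 0)) := by
  classical
  rw [Finset.prod_mul_distrib, Finset.prod_mul_distrib, Finset.prod_const,
    Finset.prod_ite, Finset.prod_const, Finset.prod_const, one_pow, mul_one,
    Real.exp_add]
  congr 2
  · rw [mul_comm, Real.exp_nat_mul, Finset.card_range]
  · rw [show β ^ 2 * (r * (((Finset.range t.length).filter
        (fun j => 0 < j ∧ t.getD j 0 = 1)).card : ℝ))
      = ((((Finset.range t.length).filter (fun j => 0 < j ∧ t.getD j 0 = 1)).card : ℝ))
        * (r * β ^ 2) by ring, Real.exp_nat_mul]

/-- Partition function with the first-jump correction. -/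
noncomputable def Zcs (K : ℕ → ℝ) (EE eh : ℝ) (N : ℕ) : ℝ :=
  ∑ t ∈ comps N, ∏ j ∈ Finset.range t.length,
    (eh * (if 0 < j ∧ t.getD j 0 = 1 then EE else 1) * K (t.getD j 0))

lemma Zcs_rec (K : ℕ → ℝ) (EE eh : ℝ) (N : ℕ) (hN : 1 ≤ N) :
    Zcs K EE eh N = ∑ k ∈ Finset.Icc 1 N,
      (eh * K k) * Vc (fun k => eh * (if k = 1 then EE else 1) * K k) (N - k) := by
  classical
  rw [Zcs, comps_sum_split N hN]
  refine Finset.sum_congr rfl fun k _ => ?_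
  rw [Vc, Finset.mul_sum]
  refine Finset.sum_congr rfl fun t' _ => ?_
  rw [List.length_cons, Finset.prod_range_succ']
  have h0 : eh * (if 0 < 0 ∧ (k :: t').getD 0 0 = 1 then EE else 1) * K ((k :: t').getD 0 0)
      = eh * K k := by
    rw [if_neg (by simp), mul_one, List.getD_cons_zero]
  rw [h0, mul_comm]
  congr 1
  refine Finset.prod_congr rfl fun j _ => ?_
  rw [List.getD_cons_succ]
  congr 2
  simp only [Nat.zero_lt_succ, true_and]

lemma Zcs_bounds (K : ℕ → ℝ) (hKn : ∀ n, 0 ≤ K n) (EE eh : ℝ) (hEE : 0 < EE)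
    (heh : 0 < eh) (N : ℕ) (hN : 1 ≤ N) :
    min 1 EE⁻¹ * Vc (fun k => eh * (if k = 1 then EE else 1) * K k) N ≤ Zcs K EE eh N
    ∧ Zcs K EE eh N ≤ max 1 EE⁻¹ * Vc (fun k => eh * (if k = 1 then EE else 1) * K k) N := by
  classical
  set w : ℕ → ℝ := fun k => eh * (if k = 1 then EE else 1) * K k with hw
  have hwn : ∀ k, 0 ≤ w k := fun k => by
    rw [hw]
    refine mul_nonneg (mul_nonneg heh.le ?_) (hKn k)
    split_ifs
    · exact hEE.le
    · norm_num
  have hterm : ∀ k, eh * K k = w k * (if k = 1 then EE⁻¹ else 1) := by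
    intro k
    by_cases hk : k = 1
    · simp only [hw, if_pos hk]
      field_simp
    · simp only [hw, if_neg hk]
      ring
  have hVnn : ∀ m, 0 ≤ Vc w m := Vc_nonneg w hwn
  constructor
  · rw [Zcs_rec K EE eh N hN, Vc_rec w N hN, Finset.mul_sum]
    refine Finset.sum_le_sum fun k _ => ?_
    rw [hterm k]
    have h1 : min 1 EE⁻¹ ≤ (if k = 1 then EE⁻¹ else 1) := by
      split_ifs
      · exact min_le_right _ _
      · exact min_le_left _ _
    calc min 1 EE⁻¹ * (w k * Vc w (N - k))
        = (w k * Vc w (N - k)) * min 1 EE⁻¹ := by ring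
      _ ≤ (w k * Vc w (N - k)) * (if k = 1 then EE⁻¹ else 1) := by
          refine mul_le_mul_of_nonneg_left h1 (mul_nonneg (hwn k) (hVnn _))
      _ = w k * (if k = 1 then EE⁻¹ else 1) * Vc w (N - k) := by ring
  · rw [Zcs_rec K EE eh N hN, Vc_rec w N hN, Finset.mul_sum]
    refine Finset.sum_le_sum fun k _ => ?_
    rw [hterm k]
    have h1 : (if k = 1 then EE⁻¹ else 1) ≤ max 1 EE⁻¹ := by
      split_ifs
      · exact le_max_right _ _
      · exact le_max_left _ _
    calc w k * (if k = 1 then EE⁻¹ else 1) * Vc w (N - k)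
        = (w k * Vc w (N - k)) * (if k = 1 then EE⁻¹ else 1) := by ring
      _ ≤ (w k * Vc w (N - k)) * max 1 EE⁻¹ := by
          refine mul_le_mul_of_nonneg_left h1 (mul_nonneg (hwn k) (hVnn _))
      _ = max 1 EE⁻¹ * (w k * Vc w (N - k)) := by ring

/-- The annealed critical curve for `q = 1` correlations:
`h_c^ann(β) = −log(1−K(∞)) − β²/2 − log(1 + (K(1)/(1−K(∞)))(e^{ρ₁β²} − 1))`. -/
theorem annealed_critical_curve_q_one
    {Ω : Type*} [MeasurableSpace Ω] (P : Measure Ω) [IsProbabilityMeasure P]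
    (T : ℕ → Ω → ℕ∞) (hmeas : ∀ i, Measurable (T i))
    (hindep : iIndepFun T P)
    (hident : ∀ i, Measure.map (T i) P = Measure.map (T 0) P)
    (K : ℕ → ℝ) (Kinf : ℝ) (hK0 : K 0 = 0) (hKpos : ∀ n, 1 ≤ n → 0 < K n)
    (hlaw : ∀ n : ℕ, (P (T 0 ⁻¹' {(n : ℕ∞)})).toReal = K n)
    (hlawtop : (P (T 0 ⁻¹' {(⊤ : ℕ∞)})).toReal = Kinf)
    (hKinf : Kinf = 1 - ∑' n : ℕ, K (n + 1)) (hKinf1 : Kinf < 1)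
    (ρ : ℕ → ℝ) (hρ : ∀ k, 1 < k → ρ k = 0)  -- range q = 1
    (Fann : ℝ → ℝ → ℝ)
    (hFann : ∀ β h : ℝ, 0 ≤ β →
      Tendsto (fun N : ℕ => Real.log (Zfun P T ρ β h N) / N) atTop (nhds (Fann β h)))
    (β : ℝ) (hβ : 0 ≤ β) :
    sSup {h : ℝ | Fann β h = 0} =
      -Real.log (1 - Kinf) - β ^ 2 / 2 -
        Real.log (1 + K 1 / (1 - Kinf) * (Real.exp (ρ 1 * β ^ 2) - 1)) := by
  classical
  set EE : ℝ := Real.exp (ρ 1 * β ^ 2) with hEEdef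
  have hEEpos : 0 < EE := Real.exp_pos _
  have hKn : ∀ n, 0 ≤ K n := fun n => by rw [← hlaw n]; exact ENNReal.toReal_nonneg
  have hK1 : 0 < K 1 := hKpos 1 le_rfl
  have h1mK : 0 < 1 - Kinf := by linarith
  have hKsum : Summable (fun n : ℕ => K (n + 1)) := by
    refine summable_of_sum_range_le (c := 1) (fun n => hKn _) (fun m => ?_)
    have hcalc : ∑ n ∈ Finset.range m, K (n + 1)
        = (∑ n ∈ Finset.range m, P ((T 0) ⁻¹' {(((n+1) : ℕ) : ℕ∞)})).toReal := by
      rw [ENNReal.toReal_sum (fun a _ => measure_ne_top P _)]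
      exact Finset.sum_congr rfl fun n _ => (hlaw (n+1)).symm
    rw [hcalc]
    have hdisj : Set.PairwiseDisjoint (↑(Finset.range m) : Set ℕ)
        (fun n : ℕ => (T 0) ⁻¹' {(((n+1) : ℕ) : ℕ∞)}) := by
      intro a _ b _ hab
      refine Set.disjoint_left.mpr fun x hxa hxb => ?_
      simp only [Set.mem_preimage, Set.mem_singleton_iff] at hxa hxb
      rw [hxa] at hxb
      have : a + 1 = b + 1 := Nat.cast_inj.mp hxb
      exact hab (by omega)
    rw [← measure_biUnion_finset hdisj (fun n _ => hmeas 0 (measurableSet_singleton _))]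
    calc (P _).toReal ≤ (1 : ENNReal).toReal :=
          ENNReal.toReal_mono ENNReal.one_ne_top prob_le_one
      _ = 1 := ENNReal.toReal_one
  have htsumK : ∑' n : ℕ, K (n + 1) = 1 - Kinf := by linarith
  set S0 : ℝ := (1 - Kinf) + K 1 * (EE - 1) with hS0def
  have hK1le : K 1 ≤ 1 - Kinf := by
    have h := Summable.le_tsum hKsum 0 (fun j _ => hKn _)
    rw [htsumK] at h
    simpa using h
  have hS0pos : 0 < S0 := by
    have h1 : S0 = ((1 - Kinf) - K 1) + K 1 * EE := by rw [hS0def]; ring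
    nlinarith [mul_pos hK1 hEEpos]
  set hcrit : ℝ := -Real.log (1 - Kinf) - β ^ 2 / 2
      - Real.log (1 + K 1 / (1 - Kinf) * (EE - 1)) with hhcdef
  have harg : 1 + K 1 / (1 - Kinf) * (EE - 1) = S0 / (1 - Kinf) := by
    rw [hS0def]; field_simp
  have hhc : Real.exp (hcrit + β ^ 2 / 2) = S0⁻¹ := by
    rw [hhcdef, harg, Real.log_div (ne_of_gt hS0pos) (ne_of_gt h1mK)]
    rw [show -Real.log (1 - Kinf) - β ^ 2 / 2 - (Real.log S0 - Real.log (1 - Kinf)) + β ^ 2 / 2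
        = -Real.log S0 by ring]
    rw [Real.exp_neg, Real.exp_log hS0pos]
  -- weight facts
  have hwnn : ∀ h' : ℝ, ∀ k : ℕ,
      0 ≤ Real.exp (h' + β ^ 2 / 2) * (if k = 1 then EE else 1) * K k := by
    intro h' k
    refine mul_nonneg (mul_nonneg (Real.exp_pos _).le ?_) (hKn k)
    split_ifs
    exacts [hEEpos.le, zero_le_one]
  have hw1 : ∀ h' : ℝ,
      0 < Real.exp (h' + β ^ 2 / 2) * (if (1:ℕ) = 1 then EE else 1) * K 1 := by
    intro h'
    rw [if_pos rfl]
    positivity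
  have hwsplit : ∀ (h' : ℝ) (n : ℕ),
      Real.exp (h' + β ^ 2 / 2) * (if n + 1 = 1 then EE else 1) * K (n+1)
      = Real.exp (h' + β ^ 2 / 2) * K (n+1)
        + (if n = 0 then Real.exp (h' + β ^ 2 / 2) * (K 1 * (EE - 1)) else 0) := by
    intro h' n
    match n with
    | 0 => rw [if_pos rfl, if_pos rfl]; norm_num; ring
    | (m+1) => rw [if_neg (by omega), if_neg (by omega)]; ring
  have hwsummable : ∀ h' : ℝ, Summable (fun n : ℕ =>
      Real.exp (h' + β ^ 2 / 2) * (if n + 1 = 1 then EE else 1) * K (n+1)) := by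
    intro h'
    exact ((hKsum.mul_left _).add ((hasSum_ite_eq 0 _).summable)).congr
      (fun n => (hwsplit h' n).symm)
  have hwtsum : ∀ h' : ℝ, ∑' n : ℕ,
      Real.exp (h' + β ^ 2 / 2) * (if n + 1 = 1 then EE else 1) * K (n+1)
      = Real.exp (h' + β ^ 2 / 2) * S0 := by
    intro h'
    rw [tsum_congr (hwsplit h'), Summable.tsum_add (hKsum.mul_left _) ((hasSum_ite_eq 0 _).summable),
      tsum_mul_left, htsumK, tsum_ite_eq, hS0def]
    ring
  have hIccRange : ∀ (h' : ℝ) (M : ℕ),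
      ∑ k ∈ Finset.Icc 1 M, Real.exp (h' + β ^ 2 / 2) * (if k = 1 then EE else 1) * K k
      = ∑ n ∈ Finset.range M,
          Real.exp (h' + β ^ 2 / 2) * (if n + 1 = 1 then EE else 1) * K (n+1) :=
    fun h' M => sum_Icc_one _ M
  have hble : ∀ (h' : ℝ) (M : ℕ),
      ∑ k ∈ Finset.Icc 1 M, Real.exp (h' + β ^ 2 / 2) * (if k = 1 then EE else 1) * K k
      ≤ Real.exp (h' + β ^ 2 / 2) * S0 := by
    intro h' M
    rw [hIccRange, ← hwtsum h']
    exact Summable.sum_le_tsum _ (fun i _ => hwnn h' _) (hwsummable h')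
  have hZeq : ∀ (h' : ℝ) (N : ℕ),
      Zfun P T ρ β h' N = Zcs K EE (Real.exp (h' + β ^ 2 / 2)) N := by
    intro h' N
    rw [Zfun_comps P T hmeas hindep hident K hK0 hlaw ρ hρ β h' N, Zcs, hEEdef]
    exact Finset.sum_congr rfl fun t _ => summand_eq K (ρ 1) β h' t
  set cL : ℝ := min 1 EE⁻¹ with hcLdef
  set cU : ℝ := max 1 EE⁻¹ with hcUdef
  have hcL : 0 < cL := lt_min one_pos (inv_pos.mpr hEEpos)
  have hcU : 0 < cU := lt_of_lt_of_le one_pos (le_max_left _ _)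
  have hVpos : ∀ (h' : ℝ) (N : ℕ),
      0 < Vc (fun k => Real.exp (h' + β ^ 2 / 2) * (if k = 1 then EE else 1) * K k) N :=
    fun h' N => Vc_pos _ (hwnn h') (hw1 h') N
  have hZlb : ∀ (h' : ℝ) (N : ℕ), 1 ≤ N →
      cL * Vc (fun k => Real.exp (h' + β ^ 2 / 2) * (if k = 1 then EE else 1) * K k) N
        ≤ Zfun P T ρ β h' N := by
    intro h' N hN
    rw [hZeq h' N]
    exact (Zcs_bounds K hKn EE _ hEEpos (Real.exp_pos _) N hN).1
  have hZub : ∀ (h' : ℝ) (N : ℕ), 1 ≤ N →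
      Zfun P T ρ β h' N
        ≤ cU * Vc (fun k => Real.exp (h' + β ^ 2 / 2) * (if k = 1 then EE else 1) * K k) N := by
    intro h' N hN
    rw [hZeq h' N]
    exact (Zcs_bounds K hKn EE _ hEEpos (Real.exp_pos _) N hN).2
  have hZpos : ∀ (h' : ℝ) (N : ℕ), 1 ≤ N → 0 < Zfun P T ρ β h' N :=
    fun h' N hN => lt_of_lt_of_le (mul_pos hcL (hVpos h' N)) (hZlb h' N hN)
  -- lower-bound principle for the free energy
  have hlower : ∀ (h' θ : ℝ), 0 < θ →
      (∃ N0, 1 ≤ N0 ∧ θ ^ N0 ≤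
        Vc (fun k => Real.exp (h' + β ^ 2 / 2) * (if k = 1 then EE else 1) * K k) N0) →
      Real.log θ ≤ Fann β h' := by
    rintro h' θ hθ0 ⟨N0, hN01, hN0⟩
    obtain ⟨c, hc0, hgeom⟩ := exists_geom_lb _ (hwnn h') (hw1 h') θ hθ0 N0 hN01 hN0
    have hev : ∀ᶠ N : ℕ in atTop, Real.log (cL * c) / N + Real.log θ
        ≤ Real.log (Zfun P T ρ β h' N) / N := by
      refine eventually_atTop.mpr ⟨1, fun N hN => ?_⟩
      have h1 : cL * (c * θ ^ N) ≤ Zfun P T ρ β h' N :=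
        le_trans (mul_le_mul_of_nonneg_left (hgeom N) hcL.le) (hZlb h' N hN)
      have h2 : (0:ℝ) < cL * (c * θ ^ N) := by positivity
      have h3 : Real.log (cL * (c * θ ^ N)) ≤ Real.log (Zfun P T ρ β h' N) :=
        Real.log_le_log h2 h1
      have hN0' : (0:ℝ) < (N : ℝ) := by exact_mod_cast hN
      have h4 : Real.log (cL * (c * θ ^ N)) = Real.log (cL * c) + N * Real.log θ := by
        rw [show cL * (c * θ ^ N) = (cL * c) * θ ^ N by ring,
          Real.log_mul (by positivity) (by positivity), Real.log_pow]
      have h5 : Real.log (cL * c) / N + Real.log θ = Real.log (cL * (c * θ ^ N)) / N := by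
        rw [h4, add_div, mul_div_cancel_left₀ _ (ne_of_gt hN0')]
      rw [h5]
      gcongr
    have hconst : Tendsto (fun N : ℕ => Real.log (cL * c) / N + Real.log θ) atTop
        (nhds (Real.log θ)) := by
      simpa using (tendsto_const_div_atTop_nhds_zero_nat (Real.log (cL * c))).add_const
        (Real.log θ)
    exact le_of_tendsto_of_tendsto hconst (hFann β h' hβ) hev
  -- the free energy vanishes at the critical point
  have hFhc : Fann β hcrit = 0 := by
    have hsum1 : Real.exp (hcrit + β ^ 2 / 2) * S0 = 1 := by
      rw [hhc]; field_simp
    have hb : ∀ M, ∑ k ∈ Finset.Icc 1 M,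
        Real.exp (hcrit + β ^ 2 / 2) * (if k = 1 then EE else 1) * K k ≤ 1 := by
      intro M
      have := hble hcrit M
      rw [hsum1] at this
      exact this
    have hVle1 : ∀ N, Vc (fun k =>
        Real.exp (hcrit + β ^ 2 / 2) * (if k = 1 then EE else 1) * K k) N ≤ 1 :=
      Vc_le_one _ (hwnn hcrit) hb
    have hup : Fann β hcrit ≤ 0 := by
      have hev : ∀ᶠ N : ℕ in atTop,
          Real.log (Zfun P T ρ β hcrit N) / N ≤ Real.log cU / N := by
        refine eventually_atTop.mpr ⟨1, fun N hN => ?_⟩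
        have h1 := hZub hcrit N hN
        have h2 : cU * Vc (fun k =>
            Real.exp (hcrit + β ^ 2 / 2) * (if k = 1 then EE else 1) * K k) N ≤ cU := by
          nlinarith [hVle1 N, hVpos hcrit N]
        have h3 : Real.log (Zfun P T ρ β hcrit N) ≤ Real.log cU :=
          Real.log_le_log (hZpos hcrit N hN) (le_trans h1 h2)
        gcongr
      exact le_of_tendsto_of_tendsto (hFann β hcrit hβ)
        (tendsto_const_div_atTop_nhds_zero_nat _) hev
    have happrox : ∀ ε : ℝ, 0 < ε → ∃ L, 1 - ε ≤ ∑ k ∈ Finset.Icc 1 L,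
        Real.exp (hcrit + β ^ 2 / 2) * (if k = 1 then EE else 1) * K k := by
      intro ε' hε'
      have hhs := (hwsummable hcrit).hasSum.tendsto_sum_nat
      rw [hwtsum hcrit, hsum1] at hhs
      obtain ⟨L, hL⟩ := (hhs.eventually (eventually_gt_nhds
        (show 1 - ε' < 1 by linarith))).exists
      exact ⟨L, by rw [hIccRange hcrit L]; linarith⟩
    have hdown : 0 ≤ Fann β hcrit := by
      by_contra hneg
      push_neg at hneg
      obtain ⟨N0, h1, h2⟩ := subcrit_exists _ (hwnn hcrit) happrox
        (Real.exp (Fann β hcrit / 2)) (Real.exp_pos _)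
        (Real.exp_lt_one_iff.mpr (by linarith))
      have := hlower hcrit _ (Real.exp_pos _) ⟨N0, h1, h2⟩
      rw [Real.log_exp] at this
      linarith
    linarith
  -- above the critical point the free energy is positive
  have hub2 : ∀ h' ∈ {h : ℝ | Fann β h = 0}, h' ≤ hcrit := by
    intro h' hmem
    by_contra hgt
    push_neg at hgt
    have hsgt : 1 < Real.exp (h' + β ^ 2 / 2) * S0 := by
      have h1 : S0⁻¹ < Real.exp (h' + β ^ 2 / 2) := by
        rw [← hhc]
        exact Real.exp_lt_exp.mpr (by linarith)
      calc (1:ℝ) = S0⁻¹ * S0 := by field_simp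
        _ < _ := mul_lt_mul_of_pos_right h1 hS0pos
    have hhs := (hwsummable h').hasSum.tendsto_sum_nat
    rw [hwtsum h'] at hhs
    obtain ⟨L, hL⟩ := (hhs.eventually (eventually_gt_nhds hsgt)).exists
    have hL1 : 1 ≤ L := by
      by_contra hL0
      push_neg at hL0
      rw [Nat.lt_one_iff] at hL0
      subst hL0
      simp at hL
      linarith
    have hIcc : 1 < ∑ k ∈ Finset.Icc 1 L,
        Real.exp (h' + β ^ 2 / 2) * (if k = 1 then EE else 1) * K k := by
      rw [hIccRange h' L]
      exact hL
    obtain ⟨N0, hN01, hN0⟩ := supercrit_exists _ (hwnn h') L hL1 hIcc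
    set V0 := Vc (fun k =>
      Real.exp (h' + β ^ 2 / 2) * (if k = 1 then EE else 1) * K k) N0 with hV0def
    have hθpow : (Real.exp (Real.log V0 / N0)) ^ N0 = V0 := by
      rw [← Real.exp_nat_mul, mul_comm, div_mul_cancel₀ _
        (show ((N0:ℝ)) ≠ 0 by positivity)]
      exact Real.exp_log (lt_trans one_pos hN0)
    have hlog := hlower h' _ (Real.exp_pos (Real.log V0 / N0)) ⟨N0, hN01, le_of_eq hθpow⟩
    rw [Real.log_exp] at hlog
    have hθ1 : 0 < Real.log V0 / N0 := by
      have h5 : 0 < Real.log V0 := Real.log_pos hN0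
      positivity
    rw [Set.mem_setOf_eq] at hmem
    rw [hmem] at hlog
    linarith
  exact le_antisymm (csSup_le ⟨hcrit, hFhc⟩ hub2) (le_csSup ⟨hcrit, hub2⟩ hFhc)
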